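/- (Bipartite structure of the chase s-warm) Let Q ⊆ 𝔽²_s and let C^Q = chase(Q, D_green) be the s-warm obtained from the single green full s-pider edge by closing under the rewriting rules of Q. Then every vertex of C^Q either has in-degree zero (it is a tail of all its incident edges) or has out-degree zero (it is an antenna of all its incident edges); consequently every directed H-path in C^Q has length one. -/

import Mathlib

/-!  S-warms and s-warm rewriting, following Gogacz–Marcinkowski,
"The Hunt for a Red Spider".  Labels are abstract ideal s-piders: a color
(`true` = green, `false` = red) together with an empty-or-singleton upper lame
index and lower lame index.  An edge `(S, a, b)` of a s-warm is the atom
`H(S, a, b)` with tail `a` and antenna `b`. -/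

namespace Swarm

/-- Abstract ideal s-piders `𝔸_s`. -/
abbrev ISp (s : ℕ) := Bool × Option (Fin s) × Option (Fin s)

/-- A labeled edge of a s-warm: label, tail, antenna. -/
abbrev Edge (s : ℕ) (V : Type*) := ISp s × V × V

/-- `x ⊆ y` for empty-or-singleton sets coded as `Option`. -/
def osub {s : ℕ} (x y : Option (Fin s)) : Prop := ∀ i : Fin s, x = some i → y = some i

/-- `y ∖ x` for empty-or-singleton sets coded as `Option` (assuming `x ⊆ y`). -/
def odiff {s : ℕ} (y x : Option (Fin s)) : Option (Fin s) :=
  match x with | none => y | some _ => none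

/-- The action of the s-pider query `f^I_J` (indices `IJ`) on labels:
`f^I_J(S^{I'}_{J'}) = S^{I∖I'}_{J∖J'}` of the opposite color, defined iff
`I' ⊆ I` and `J' ⊆ J`. -/
def LabStep {s : ℕ} (IJ : Option (Fin s) × Option (Fin s)) (p p' : ISp s) : Prop :=
  osub p.2.1 IJ.1 ∧ osub p.2.2 IJ.2 ∧
  p' = (!p.1, odiff IJ.1 p.2.1, odiff IJ.2 p.2.2)

/-- A binary s-pider rewriting rule `f ∧↑ f'` (`wedge = true`: shared antenna)
or `f ∨↑ f'` (`wedge = false`: shared tail), given by the index pairs of its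
two s-pider query components. -/
structure BRule (s : ℕ) where
  wedge : Bool
  f : Option (Fin s) × Option (Fin s)
  f' : Option (Fin s) × Option (Fin s)

/-- The vertices of a s-warm. -/
def verts {s : ℕ} {V : Type*} (D : Set (Edge s V)) : Set V :=
  {v | ∃ e ∈ D, v = e.2.1 ∨ v = e.2.2}

/-- One execution of the rewriting rule `Q` in the s-warm `D`, with input edges
`e1, e2` (same color, sharing antenna resp. tail), creating a fresh vertex and the
two output edges `o1, o2` of the opposite color, provided no witness already
exists; `D'` is the resulting s-warm. -/
def SwStepAt {s : ℕ} {V : Type*} (Q : BRule s) (D : Set (Edge s V))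
    (e1 e2 o1 o2 : Edge s V) (D' : Set (Edge s V)) : Prop :=
  e1 ∈ D ∧ e2 ∈ D ∧ e1.1.1 = e2.1.1 ∧
  LabStep Q.f e1.1 o1.1 ∧ LabStep Q.f' e2.1 o2.1 ∧
  (if Q.wedge then
    e1.2.2 = e2.2.2 ∧ o1.2.1 = e1.2.1 ∧ o2.2.1 = e2.2.1 ∧ o1.2.2 = o2.2.2 ∧
      o1.2.2 ∉ verts D ∧
      ¬ ∃ c, (o1.1, e1.2.1, c) ∈ D ∧ (o2.1, e2.2.1, c) ∈ D
  else
    e1.2.1 = e2.2.1 ∧ o1.2.2 = e1.2.2 ∧ o2.2.2 = e2.2.2 ∧ o1.2.1 = o2.2.1 ∧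
      o1.2.1 ∉ verts D ∧
      ¬ ∃ c, (o1.1, c, e1.2.2) ∈ D ∧ (o2.1, c, e2.2.2) ∈ D) ∧
  D' = D ∪ {o1, o2}

/-- The `ToDo` set of a s-warm: the rule instances that can still be executed. -/
def SwToDo {s : ℕ} {V : Type*} (𝒬 : Set (BRule s)) (D : Set (Edge s V)) :
    Set (BRule s × Edge s V × Edge s V) :=
  {q | q.1 ∈ 𝒬 ∧ ∃ o1 o2 D', SwStepAt q.1 D q.2.1 q.2.2 o1 o2 D'}

/-- Union of the stages strictly below `i`. -/
def partUnion {X : Type*} (seq : Ordinal.{0} → Set X) (i : Ordinal.{0}) : Set X :=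
  ⋃ j ∈ Set.Iio i, seq j

/-- A fair rewriting (chase) sequence for the rule set `𝒬` starting from `D0`. -/
structure SwChase {s : ℕ} {V : Type*} (𝒬 : Set (BRule s)) (D0 : Set (Edge s V)) where
  len : Ordinal.{0}
  pos : 0 < len
  seq : Ordinal.{0} → Set (Edge s V)
  init : seq 0 = D0
  step : ∀ i, 0 < i → i < len →
    ∃ q ∈ SwToDo 𝒬 (partUnion seq i), ∃ o1 o2,
      SwStepAt q.1 (partUnion seq i) q.2.1 q.2.2 o1 o2 (seq i)
  fair : ∀ i < len, ∀ q ∈ SwToDo 𝒬 (partUnion seq i),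
    ∃ k, i < k ∧ k ≤ len ∧ q ∉ SwToDo 𝒬 (partUnion seq k)

/-- The result `chase(𝒬, D0)` of a rewriting sequence. -/
def SwChase.result {s : ℕ} {V : Type*} {𝒬 : Set (BRule s)} {D0 : Set (Edge s V)}
    (C : SwChase 𝒬 D0) : Set (Edge s V) := partUnion C.seq C.len

/-- The green full s-pider label. -/
def greenFull (s : ℕ) : ISp s := (true, none, none)

/-- The red full s-pider label. -/
def redFull (s : ℕ) : ISp s := (false, none, none)

/-- The initial s-warm `D_{green}`: a single edge labeled with the green full
s-pider. -/
def D0green (s : ℕ) {V : Type*} (s0 t0 : V) : Set (Edge s V) :=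
  {((true, none, none), s0, t0)}

end Swarm

namespace SwarmAux

open Swarm

/-- Bipartite invariant: every vertex has in-degree 0 or out-degree 0. -/
def BiP {s : ℕ} {V : Type*} (D : Set (Edge s V)) : Prop :=
  ∀ v : V, (∀ e ∈ D, e.2.2 ≠ v) ∨ (∀ e ∈ D, e.2.1 ≠ v)

lemma tail_mem_verts {s : ℕ} {V : Type*} {D : Set (Edge s V)} {e : Edge s V}
    (he : e ∈ D) : e.2.1 ∈ verts D := ⟨e, he, Or.inl rfl⟩

lemma antenna_mem_verts {s : ℕ} {V : Type*} {D : Set (Edge s V)} {e : Edge s V}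
    (he : e ∈ D) : e.2.2 ∈ verts D := ⟨e, he, Or.inr rfl⟩

lemma step_pres {s : ℕ} {V : Type*} {Q : BRule s} {D : Set (Edge s V)}
    {e1 e2 o1 o2 : Edge s V} {D' : Set (Edge s V)}
    (hP : BiP D) (h : SwStepAt Q D e1 e2 o1 o2 D') : BiP D' := by
  obtain ⟨he1, he2, -, -, -, hcond, hD'⟩ := h
  subst hD'
  have hmem : ∀ e : Edge s V, e ∈ D ∪ {o1, o2} ↔ e ∈ D ∨ e = o1 ∨ e = o2 := by
    intro e; simp [Set.mem_union, Set.mem_insert_iff]; tauto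
  by_cases hw : Q.wedge
  · rw [if_pos hw] at hcond
    obtain ⟨hb, ht1, ht2, hbb, hfresh, -⟩ := hcond
    intro v
    by_cases hv : o1.2.2 = v
    · right
      intro e he hc
      rcases (hmem e).1 he with heD | rfl | rfl
      · exact hfresh (hv ▸ hc ▸ tail_mem_verts heD)
      · exact hfresh (hv ▸ hc ▸ ht1 ▸ tail_mem_verts he1)
      · exact hfresh (hv ▸ hc ▸ ht2 ▸ tail_mem_verts he2)
    · rcases hP v with hL | hR
      · left
        intro e he hc
        rcases (hmem e).1 he with heD | rfl | rfl
        · exact hL e heD hc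
        · exact hv hc
        · exact hv (hbb ▸ hc)
      · right
        intro e he hc
        rcases (hmem e).1 he with heD | rfl | rfl
        · exact hR e heD hc
        · exact hR e1 he1 (ht1 ▸ hc)
        · exact hR e2 he2 (ht2 ▸ hc)
  · rw [if_neg hw] at hcond
    obtain ⟨hb, ht1, ht2, hbb, hfresh, -⟩ := hcond
    intro v
    by_cases hv : o1.2.1 = v
    · left
      intro e he hc
      rcases (hmem e).1 he with heD | rfl | rfl
      · exact hfresh (hv ▸ hc ▸ antenna_mem_verts heD)
      · exact hfresh (hv ▸ hc ▸ ht1 ▸ antenna_mem_verts he1)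
      · exact hfresh (hv ▸ hc ▸ ht2 ▸ antenna_mem_verts he2)
    · rcases hP v with hL | hR
      · left
        intro e he hc
        rcases (hmem e).1 he with heD | rfl | rfl
        · exact hL e heD hc
        · exact hL e1 he1 (ht1 ▸ hc)
        · exact hL e2 he2 (ht2 ▸ hc)
      · right
        intro e he hc
        rcases (hmem e).1 he with heD | rfl | rfl
        · exact hR e heD hc
        · exact hv hc
        · exact hv (hbb ▸ hc)

lemma mem_partUnion {s : ℕ} {V : Type*} {seq : Ordinal.{0} → Set (Edge s V)}
    {i : Ordinal.{0}} {e : Edge s V} :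
    e ∈ partUnion seq i ↔ ∃ j, j < i ∧ e ∈ seq j := by
  simp [partUnion, Set.mem_iUnion]

/-- The chase sequence is monotone below `len`. -/
lemma chase_mono {s : ℕ} {V : Type*} {𝒬 : Set (BRule s)} {D0 : Set (Edge s V)}
    (C : SwChase 𝒬 D0) {j m : Ordinal.{0}} (hjm : j ≤ m) (hm : m < C.len) :
    C.seq j ⊆ C.seq m := by
  rcases eq_or_lt_of_le hjm with rfl | hlt
  · exact subset_rfl
  · have h1 : C.seq j ⊆ partUnion C.seq m := by
      intro e he; exact mem_partUnion.2 ⟨j, hlt, he⟩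
    have hm0 : 0 < m := lt_of_le_of_lt (zero_le (a := j)) hlt
    obtain ⟨q, -, o1, o2, hstep⟩ := C.step m hm0 hm
    have hEq := hstep.2.2.2.2.2.2
    intro e he
    rw [hEq]
    exact Or.inl (h1 he)

lemma union_pres {s : ℕ} {V : Type*} {𝒬 : Set (BRule s)} {D0 : Set (Edge s V)}
    (C : SwChase 𝒬 D0) {i : Ordinal.{0}} (hi : i ≤ C.len)
    (hP : ∀ j < i, BiP (C.seq j)) : BiP (partUnion C.seq i) := by
  intro v
  by_contra hcon
  push_neg at hcon
  obtain ⟨⟨e, he, hev⟩, ⟨e', he', hev'⟩⟩ := hcon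
  obtain ⟨j, hj, hej⟩ := mem_partUnion.1 he
  obtain ⟨k, hk, hek⟩ := mem_partUnion.1 he'
  set m := max j k with hm
  have hmi : m < i := max_lt hj hk
  have hmlen : m < C.len := lt_of_lt_of_le hmi hi
  have hejm : e ∈ C.seq m := chase_mono C (le_max_left j k) hmlen hej
  have hekm : e' ∈ C.seq m := chase_mono C (le_max_right j k) hmlen hek
  rcases hP m hmi v with hL | hR
  · exact hL e hejm hev
  · exact hR e' hekm hev'

lemma chase_BiP {V : Type*} {s : ℕ} {s0 t0 : V} (hne : s0 ≠ t0)
    {𝒬 : Set (BRule s)} (C : SwChase 𝒬 (D0green s s0 t0)) :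
    BiP C.result := by
  have key : ∀ i, i < C.len → BiP (C.seq i) := by
    intro i
    induction i using Ordinal.induction with
    | h i IH =>
      intro hi
      rcases eq_or_lt_of_le (zero_le (a := i)) with h0 | h0
      · rw [← h0, C.init]
        intro v
        by_cases hv : t0 = v
        · right
          intro e he hc
          rcases he with rfl
          exact hne (hc.trans hv.symm)
        · left
          intro e he hc
          rcases he with rfl
          exact hv hc
      · have hPU : BiP (partUnion C.seq i) :=
          union_pres C (le_of_lt hi) (fun j hj => IH j hj (lt_trans hj hi))
        obtain ⟨q, -, o1, o2, hstep⟩ := C.step i h0 hi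
        exact step_pres hPU hstep
  exact union_pres C le_rfl key

end SwarmAux

open Swarm in
/-- **Bipartite structure of the chase s-warm.**  For a set `𝒬` of
binary s-pider rewriting rules (whose components are s-pider queries, i.e. have at
least one lame index), every vertex of `chase(𝒬, D_green)` has in-degree zero or
out-degree zero; consequently every directed `H`-path has length one. -/
theorem swarm_bipartite {V : Type*} (s : ℕ) (s0 t0 : V) (hne : s0 ≠ t0)
    (𝒬 : Set (BRule s))
    (h𝒬 : ∀ Q ∈ 𝒬, (Q.f.1.isSome ∨ Q.f.2.isSome) ∧ (Q.f'.1.isSome ∨ Q.f'.2.isSome))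
    (C : SwChase 𝒬 (D0green s s0 t0)) :
    (∀ v : V, (∀ e ∈ C.result, e.2.2 ≠ v) ∨ (∀ e ∈ C.result, e.2.1 ≠ v)) ∧
    (∀ e ∈ C.result, ∀ e' ∈ C.result, e.2.2 ≠ e'.2.1) := by
  have hB := SwarmAux.chase_BiP hne C
  refine ⟨hB, ?_⟩
  intro e he e' he' hc
  rcases hB e.2.2 with hL | hR
  · exact hL e he rfl
  · exact hR e' he' hc.symm
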